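/- For 0 < h < 1/(2 f_c) and each integer ℓ with -f_c ≤ ℓ ≤ f_c - 1, the quantity a_ℓ = (-1)^ℓ (cos(π h f_c)/(2 f_c)) · (cot(π(1/(4f_c) + ℓ/(2f_c) - h/2)) - cot(π(1/(4f_c) + ℓ/(2f_c) + h/2))) is nonzero and has sign (-1)^ℓ. -/

import Mathlib

open Real

lemma cot_diff_pos {k : ℤ} {x y : ℝ} (h1 : (k : ℝ) * π < x) (hxy : x < y)
    (h2 : y < ((k : ℝ) + 1) * π) : 0 < Real.cot x - Real.cot y := by
  set u := x - k * π with hu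
  set v := y - k * π with hv
  have hu0 : 0 < u := by simp only [hu]; linarith
  have huv : u < v := by simp only [hu, hv]; linarith
  have hvpi : v < π := by simp only [hv]; linarith
  have hsinu : 0 < Real.sin u := Real.sin_pos_of_pos_of_lt_pi hu0 (lt_trans huv hvpi)
  have hsinv : 0 < Real.sin v := Real.sin_pos_of_pos_of_lt_pi (lt_trans hu0 huv) hvpi
  have hsx : Real.sin x = (-1 : ℝ) ^ k * Real.sin u := by
    have := Real.sin_add_int_mul_pi u k
    rw [hu] at this; rw [← this]; ring_nf
  have hsy : Real.sin y = (-1 : ℝ) ^ k * Real.sin v := by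
    have := Real.sin_add_int_mul_pi v k
    rw [hv] at this; rw [← this]; ring_nf
  have hone : ((-1 : ℝ) ^ k) * ((-1 : ℝ) ^ k) = 1 := by
    rw [← mul_zpow]; norm_num
  have hprod : 0 < Real.sin x * Real.sin y := by
    rw [hsx, hsy]
    have : (-1 : ℝ) ^ k * Real.sin u * ((-1 : ℝ) ^ k * Real.sin v) =
        (((-1 : ℝ) ^ k) * ((-1 : ℝ) ^ k)) * (Real.sin u * Real.sin v) := by ring
    rw [this, hone, one_mul]
    exact mul_pos hsinu hsinv
  have hx0 : Real.sin x ≠ 0 := by intro h; rw [h] at hprod; simp at hprod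
  have hy0 : Real.sin y ≠ 0 := by intro h; rw [h] at hprod; simp at hprod
  have hsyx : 0 < Real.sin (y - x) := by
    apply Real.sin_pos_of_pos_of_lt_pi
    · linarith
    · linarith
  have key : Real.cot x - Real.cot y = Real.sin (y - x) / (Real.sin x * Real.sin y) := by
    rw [Real.cot_eq_cos_div_sin, Real.cot_eq_cos_div_sin, Real.sin_sub]
    field_simp
  rw [key]
  exact div_pos hsyx hprod

theorem amplitude_sign (fc : ℕ) (hfc : 1 ≤ fc) (h : ℝ)
    (hh0 : 0 < h) (hh1 : h < 1 / (2 * fc))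
    (l : ℤ) (hl1 : -(fc : ℤ) ≤ l) (hl2 : l ≤ (fc : ℤ) - 1) :
    (-1 : ℝ) ^ l * (Real.cos (π * h * fc) / (2 * fc)) *
      (Real.cot (π * (1 / (4 * fc) + (l : ℝ) / (2 * fc) - h / 2)) -
       Real.cot (π * (1 / (4 * fc) + (l : ℝ) / (2 * fc) + h / 2))) ≠ 0 ∧
    0 < (-1 : ℝ) ^ l * ((-1 : ℝ) ^ l * (Real.cos (π * h * fc) / (2 * fc)) *
      (Real.cot (π * (1 / (4 * fc) + (l : ℝ) / (2 * fc) - h / 2)) -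
       Real.cot (π * (1 / (4 * fc) + (l : ℝ) / (2 * fc) + h / 2)))) := by
  have hfcR : (1 : ℝ) ≤ (fc : ℝ) := by exact_mod_cast hfc
  have hfc0 : (0 : ℝ) < (fc : ℝ) := by linarith
  have hpi := Real.pi_pos
  rw [lt_div_iff₀ (by positivity : (0:ℝ) < 2 * fc)] at hh1
  -- hh1 : h * (2 * fc) < 1
  have hhfc : h * fc < 1 / 2 := by nlinarith
  have hquarter : h / 2 < 1 / (4 * (fc : ℝ)) := by
    rw [div_lt_div_iff₀ (by norm_num) (by positivity)]
    nlinarith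
  -- positive cosine
  have hcos : 0 < Real.cos (π * h * fc) := by
    apply Real.cos_pos_of_mem_Ioo
    constructor
    · have : 0 < π * h * fc := by positivity
      nlinarith
    · have : π * h * (fc : ℝ) = π * (h * fc) := by ring
      rw [this]
      nlinarith [mul_pos hpi (by linarith : (0:ℝ) < 1/2 - h * fc)]
  -- floor division
  set k : ℤ := l / (2 * (fc : ℤ)) with hk
  have h2fc : (0 : ℤ) < 2 * (fc : ℤ) := by positivity
  have hdm := Int.mul_ediv_add_emod l (2 * (fc : ℤ))
  rw [← hk] at hdm
  have hm0 := Int.emod_nonneg l (ne_of_gt h2fc)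
  have hm1 := Int.emod_lt_of_pos l h2fc
  have hk1 : 2 * (fc : ℤ) * k ≤ l := by omega
  have hk2 : l + 1 ≤ 2 * (fc : ℤ) * (k + 1) := by
    have hexp : 2 * (fc : ℤ) * (k + 1) = 2 * fc * k + 2 * fc := by ring
    omega
  have hk1R : 2 * (fc : ℝ) * (k : ℝ) ≤ (l : ℝ) := by exact_mod_cast hk1
  have hk2R : (l : ℝ) + 1 ≤ 2 * (fc : ℝ) * ((k : ℝ) + 1) := by exact_mod_cast hk2
  -- bounds on arguments
  have hlk : (k : ℝ) ≤ (l : ℝ) / (2 * fc) := by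
    rw [le_div_iff₀ (by positivity)]; nlinarith
  have hlk2 : (l : ℝ) / (2 * fc) + 1 / (2 * fc) ≤ (k : ℝ) + 1 := by
    rw [← add_div, div_le_iff₀ (by positivity)]; nlinarith
  have hhalf : 1 / (4 * (fc : ℝ)) + 1 / (4 * (fc : ℝ)) = 1 / (2 * fc) := by
    field_simp; ring
  have hb1 : (k : ℝ) * π < π * (1 / (4 * fc) + (l : ℝ) / (2 * fc) - h / 2) := by
    nlinarith
  have hb2 : π * (1 / (4 * fc) + (l : ℝ) / (2 * fc) + h / 2) < ((k : ℝ) + 1) * π := by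
    nlinarith
  have hb3 : π * (1 / (4 * fc) + (l : ℝ) / (2 * fc) - h / 2) <
      π * (1 / (4 * fc) + (l : ℝ) / (2 * fc) + h / 2) := by nlinarith
  have hD := cot_diff_pos hb1 hb3 hb2
  have hC : 0 < Real.cos (π * h * fc) / (2 * fc) := by positivity
  have hsq : ((-1 : ℝ) ^ l) * ((-1 : ℝ) ^ l) = 1 := by
    rw [← mul_zpow]; norm_num
  constructor
  · exact mul_ne_zero (mul_ne_zero (zpow_ne_zero l (by norm_num)) (ne_of_gt hC)) (ne_of_gt hD)
  · have heq : (-1 : ℝ) ^ l * ((-1 : ℝ) ^ l * (Real.cos (π * h * fc) / (2 * fc)) *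
      (Real.cot (π * (1 / (4 * fc) + (l : ℝ) / (2 * fc) - h / 2)) -
       Real.cot (π * (1 / (4 * fc) + (l : ℝ) / (2 * fc) + h / 2)))) =
      (Real.cos (π * h * fc) / (2 * fc)) *
      (Real.cot (π * (1 / (4 * fc) + (l : ℝ) / (2 * fc) - h / 2)) -
       Real.cot (π * (1 / (4 * fc) + (l : ℝ) / (2 * fc) + h / 2))) := by
      rw [← mul_assoc, ← mul_assoc, hsq, one_mul]
    rw [heq]
    exact mul_pos hC hD
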